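/- Suppose ν_p = (n−p)λ for 0 ≤ p ≤ n with λ an integer, and ρ_q = q(ρ_1 − ρ_0) + ρ_0 with ρ_0 = nλ. If there exists a ring homomorphism to the rational model sending a ↦ kα, b ↦ lβ, x ↦ mχ (k,l,m nonzero rationals) intertwining Δ with the rational BV operator Δ(α^p β χ^q) = [(n−p)+q(n+1)]α^p χ^q, then l = 1 and ρ_1 = 2n+1 (given λ = 1). -/
import Mathlib


/-- the rational comparison argument.  Suppose the integral BV coefficients
satisfy `ν_p = (n-p)λ` for `0 ≤ p ≤ n` (with `λ = 1`) and `ρ_q = q(ρ_1 - ρ_0) + ρ_0` with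
`ρ_0 = nλ`, so that `Δ(a^p b x^q) = (ν_p + ρ_q - ν_0) a^p x^q` integrally.  If there is a
ring homomorphism `r_*` to the rational model sending `a ↦ kα`, `b ↦ lβ`, `x ↦ mχ`
(`k, l, m` nonzero rationals) which intertwines `Δ` with the rational BV operator
`Δ(α^p β χ^q) = [(n-p) + q(n+1)] α^p χ^q` — i.e. comparing the coefficients of the
nonzero monomials `α^p χ^q` (those with `p < n` or `q = 0`) in
`r_*(Δ(a^p b x^q)) = Δ(r_*(a^p b x^q))` — then `l = 1` and `ρ_1 = 2n + 1`. -/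
theorem stmt_17 (n : ℕ) (hn : 1 ≤ n) (lam : ℤ) (hlam : lam = 1)
    (ν ρ : ℕ → ℤ)
    (hν : ∀ p : ℕ, p ≤ n → ν p = ((n : ℤ) - p) * lam)
    (hρ : ∀ q : ℕ, ρ q = (q : ℤ) * (ρ 1 - ρ 0) + ρ 0)
    (hρ0 : ρ 0 = (n : ℤ) * lam)
    (k l m : ℚ) (hk : k ≠ 0) (hl : l ≠ 0) (hm : m ≠ 0)
    (hcomp : ∀ p q : ℕ, p ≤ n → (p < n ∨ q = 0) →
      ((ν p + ρ q - ν 0 : ℤ) : ℚ) * k ^ p * m ^ q =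
        l * (((n : ℚ) - p) + q * ((n : ℚ) + 1)) * k ^ p * m ^ q) :
    l = 1 ∧ ρ 1 = 2 * (n : ℤ) + 1 := by
  have h00 := hcomp 0 0 (Nat.zero_le n) (Or.inr rfl)
  simp [hν 0 (Nat.zero_le n), hρ0, hlam] at h00
  have hn' : (n : ℚ) ≠ 0 := Nat.cast_ne_zero.mpr (by omega)
  have hl1 : l = 1 := by
    have : (n : ℚ) * l = (n : ℚ) * 1 := by linarith [h00]
    exact mul_left_cancel₀ hn' this
  refine ⟨hl1, ?_⟩
  have h01 := hcomp 0 1 (Nat.zero_le n) (Or.inl (by omega))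
  simp [hν 0 (Nat.zero_le n), hl1, hm] at h01
  have : ((ρ 1 : ℤ) : ℚ) = ((2 * (n : ℤ) + 1 : ℤ) : ℚ) := by push_cast; linarith
  exact_mod_cast this
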